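/- Suppose a sequence of nonnegative reals (a_k) satisfies a_{k+1} ≤ (C·μ^{2k})^{1/p_k}·a_k for all k ≥ 0, where μ > 1, C ≥ 1, p_k = μ^k·p₀ with p₀ > 0. Then the sequence (a_k) is bounded, and moreover lim sup_k a_k ≤ C^{S₁/p₀}·μ^{2S₂/p₀}·a₀ where S₁ = ∑_{k≥0} μ^{-k} = μ/(μ-1) and S₂ = ∑_{k≥0} k·μ^{-k} = μ/(μ-1)². -/

import Mathlib

open Finset in
private lemma rpow_sum_aux (x : ℝ) (hx : 0 < x) (s : Finset ℕ) (f : ℕ → ℝ) :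
    x ^ (∑ j ∈ s, f j) = ∏ j ∈ s, x ^ f j := by
  induction s using Finset.cons_induction with
  | empty => simp
  | cons a s ha ih => rw [Finset.sum_cons, Finset.prod_cons, Real.rpow_add hx, ih]

theorem stmt_7 (a : ℕ → ℝ) (ha : ∀ k, 0 ≤ a k) (μ C p₀ : ℝ)
    (hμ : 1 < μ) (hC : 1 ≤ C) (hp₀ : 0 < p₀)
    (p : ℕ → ℝ) (hp : ∀ k, p k = μ ^ k * p₀)
    (hrec : ∀ k : ℕ, a (k + 1) ≤ (C * μ ^ (2 * k)) ^ (1 / p k) * a k) :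
    (∃ M : ℝ, ∀ k, a k ≤ M) ∧
      Filter.limsup a Filter.atTop ≤
        C ^ ((μ / (μ - 1)) / p₀) * μ ^ ((2 * (μ / (μ - 1) ^ 2)) / p₀) * a 0 := by
  have hμ0 : (0:ℝ) < μ := lt_trans one_pos hμ
  have hC0 : (0:ℝ) < C := lt_of_lt_of_le one_pos hC
  have hμ1 : (0:ℝ) < μ - 1 := by linarith
  set r : ℝ := 1 / μ with hr
  have hr0 : 0 ≤ r := by positivity
  have hr1 : r < 1 := by
    rw [hr, div_lt_one hμ0]; exact hμ
  set B : ℝ := C ^ ((μ / (μ - 1)) / p₀) * μ ^ ((2 * (μ / (μ - 1) ^ 2)) / p₀) with hB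
  -- key: a k ≤ F k * a 0 with F a partial product
  have hpk : ∀ k, 0 < p k := fun k => by rw [hp k]; positivity
  have key : ∀ k, a k ≤ (∏ j ∈ Finset.range k, (C * μ ^ (2 * j)) ^ (1 / p j)) * a 0 := by
    intro k
    induction k with
    | zero => simp
    | succ k ih =>
      calc a (k + 1) ≤ (C * μ ^ (2 * k)) ^ (1 / p k) * a k := hrec k
        _ ≤ (C * μ ^ (2 * k)) ^ (1 / p k) *
            ((∏ j ∈ Finset.range k, (C * μ ^ (2 * j)) ^ (1 / p j)) * a 0) := by
            apply mul_le_mul_of_nonneg_left ih (Real.rpow_nonneg (by positivity) _)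
        _ = (∏ j ∈ Finset.range (k+1), (C * μ ^ (2 * j)) ^ (1 / p j)) * a 0 := by
            rw [Finset.prod_range_succ]; ring
  -- bound the product by B
  have sum1 : ∀ k, ∑ j ∈ Finset.range k, (1 / p j) ≤ (μ / (μ - 1)) / p₀ := by
    intro k
    have h1 : ∀ j, 1 / p j = r ^ j * (1 / p₀) := by
      intro j
      rw [hp j, hr, one_div, mul_inv, div_pow, one_pow, one_div, ← inv_pow]
      rw [one_div]
    simp_rw [h1, ← Finset.sum_mul]
    have hgeo : ∑ j ∈ Finset.range k, r ^ j ≤ (1 - r)⁻¹ := by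
      have := tsum_geometric_of_lt_one hr0 hr1
      calc ∑ j ∈ Finset.range k, r ^ j ≤ ∑' j : ℕ, r ^ j :=
            Summable.sum_le_tsum _ (fun j _ => by positivity)
              (summable_geometric_of_lt_one hr0 hr1)
        _ = (1 - r)⁻¹ := this
    have heq : (1 - r)⁻¹ = μ / (μ - 1) := by
      rw [hr]; field_simp
    rw [heq] at hgeo
    calc (∑ j ∈ Finset.range k, r ^ j) * (1 / p₀) ≤ (μ / (μ - 1)) * (1 / p₀) :=
          mul_le_mul_of_nonneg_right hgeo (by positivity)
      _ = (μ / (μ - 1)) / p₀ := by ring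
  have sum2 : ∀ k, ∑ j ∈ Finset.range k, ((2 * j : ℕ) : ℝ) * (1 / p j) ≤
      (2 * (μ / (μ - 1) ^ 2)) / p₀ := by
    intro k
    have h1 : ∀ j : ℕ, ((2 * j : ℕ) : ℝ) * (1 / p j) = (j * r ^ j) * (2 / p₀) := by
      intro j
      rw [hp j, hr]
      push_cast
      rw [one_div (μ ^ j * p₀), mul_inv, div_pow, one_pow, one_div, ← inv_pow]
      ring
    simp_rw [h1, ← Finset.sum_mul]
    have hnorm : ‖r‖ < 1 := by rwa [Real.norm_eq_abs, abs_of_nonneg hr0]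
    have hsum : ∑ j ∈ Finset.range k, (j : ℝ) * r ^ j ≤ r / (1 - r) ^ 2 := by
      calc ∑ j ∈ Finset.range k, (j : ℝ) * r ^ j ≤ ∑' j : ℕ, (j : ℝ) * r ^ j :=
            Summable.sum_le_tsum _ (fun j _ => by positivity)
              ((summable_pow_mul_geometric_of_norm_lt_one 1 hnorm).congr (fun n => by simp))
        _ = r / (1 - r) ^ 2 := tsum_coe_mul_geometric_of_norm_lt_one hnorm
    have heq : r / (1 - r) ^ 2 = μ / (μ - 1) ^ 2 := by
      rw [hr]; field_simp
    rw [heq] at hsum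
    calc (∑ j ∈ Finset.range k, (j:ℝ) * r ^ j) * (2 / p₀)
        ≤ (μ / (μ - 1) ^ 2) * (2 / p₀) :=
          mul_le_mul_of_nonneg_right hsum (by positivity)
      _ = (2 * (μ / (μ - 1) ^ 2)) / p₀ := by ring
  have prodB : ∀ k, (∏ j ∈ Finset.range k, (C * μ ^ (2 * j)) ^ (1 / p j)) ≤ B := by
    intro k
    have hsplit : ∀ j, (C * μ ^ (2 * j)) ^ (1 / p j)
        = C ^ (1 / p j) * μ ^ (((2 * j : ℕ) : ℝ) * (1 / p j)) := by
      intro j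
      rw [Real.mul_rpow hC0.le (by positivity), ← Real.rpow_natCast μ (2*j),
        ← Real.rpow_mul hμ0.le]
    calc (∏ j ∈ Finset.range k, (C * μ ^ (2 * j)) ^ (1 / p j))
        = (∏ j ∈ Finset.range k, C ^ (1 / p j)) *
          (∏ j ∈ Finset.range k, μ ^ (((2 * j : ℕ) : ℝ) * (1 / p j))) := by
          simp_rw [hsplit]; rw [Finset.prod_mul_distrib]
      _ = C ^ (∑ j ∈ Finset.range k, (1 / p j)) *
          μ ^ (∑ j ∈ Finset.range k, ((2 * j : ℕ) : ℝ) * (1 / p j)) := by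
          rw [rpow_sum_aux C hC0, rpow_sum_aux μ hμ0]
      _ ≤ B := by
          rw [hB]
          apply mul_le_mul
          · exact Real.rpow_le_rpow_of_exponent_le hC (sum1 k)
          · exact Real.rpow_le_rpow_of_exponent_le hμ.le (sum2 k)
          · positivity
          · positivity
  have hbd : ∀ k, a k ≤ B * a 0 := fun k =>
    le_trans (key k) (mul_le_mul_of_nonneg_right (prodB k) (ha 0))
  refine ⟨⟨B * a 0, hbd⟩, ?_⟩
  apply Filter.limsup_le_of_le
  · exact Filter.isCoboundedUnder_le_of_le Filter.atTop (x := 0) ha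
  · exact Filter.Eventually.of_forall hbd
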